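/- An R-module E is Σ-pure-injective (i.e., the direct sum E^{(I)} of I many copies of E is pure-injective for every set I) if and only if E^{(κ)} is pure-injective. -/

import Mathlib

universe u

/-- `A` is a pure submodule of its ambient module: every finite system of
`R`-linear equations `∑ j, r i j • x j = a i` with constants `a i ∈ A` that has
a solution in the ambient module has a solution in `A`. -/
def IsPureSubmodule {R : Type*} [Ring R] {M : Type*} [AddCommGroup M] [Module R M]
    (A : Submodule R M) : Prop :=
  ∀ (m n : ℕ) (r : Fin m → Fin n → R) (a : Fin m → M),
    (∀ i, a i ∈ A) →
    (∃ x : Fin n → M, ∀ i, (∑ j, r i j • x j) = a i) →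
    ∃ x : Fin n → M, (∀ j, x j ∈ A) ∧ ∀ i, (∑ j, r i j • x j) = a i

/-- A pure embedding is an injective linear map whose image is a pure submodule
of its codomain. -/
def IsPureEmbedding {R : Type*} [Ring R] {M N : Type*} [AddCommGroup M] [Module R M]
    [AddCommGroup N] [Module R N] (f : M →ₗ[R] N) : Prop :=
  Function.Injective f ∧ IsPureSubmodule (LinearMap.range f)

/-- `E` is pure-injective: every homomorphism `g : A → E` extends along every
pure embedding `f : A → B`. -/
def PureInjective (R : Type u) [Ring R] (E : Type u) [AddCommGroup E] [Module R E] : Prop :=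
  ∀ (A B : Type u) [AddCommGroup A] [Module R A] [AddCommGroup B] [Module R B]
    (f : A →ₗ[R] B), IsPureEmbedding f →
    ∀ g : A →ₗ[R] E, ∃ h : B →ₗ[R] E, h.comp f = g

universe w₁ w₂


/-! ### pp conditions -/

/-- Homogeneous data of a pp condition in one free variable. -/
structure PPH.{v₁, v₂, uR} (R : Type uR) where
  ι : Type v₁
  κ : Type v₂
  fι : Fintype ι
  fκ : Fintype κ
  s : ι → R
  r : ι → κ → R

section PPdefs

variable {R : Type*} [Ring R] {M : Type*} [AddCommGroup M] [Module R M]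

/-- Satisfaction of a pp condition with parameter vector `a`. -/
def PPH.SatA (c : PPH R) (a : c.ι → M) (x : M) : Prop :=
  letI := c.fι; letI := c.fκ
  ∃ y : c.κ → M, ∀ i, c.s i • x + ∑ j, c.r i j • y j = a i

/-- The pp-definable subgroup cut out by the homogeneous condition. -/
def PPH.G (c : PPH R) (M : Type*) [AddCommGroup M] [Module R M] : Set M :=
  {x | c.SatA (fun _ => (0 : M)) x}

/-- A pp condition with parameters in `M`. -/
structure PP.{v₁, v₂, uR, uM} (R : Type uR) (M : Type uM) where
  h : PPH.{v₁, v₂} R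
  a : h.ι → M

def PP.Sat (c : PP R M) (x : M) : Prop := c.h.SatA c.a x

lemma PPH.satA_congr (c : PPH R) {a a' : c.ι → M} (h : ∀ i, a i = a' i) (x : M) :
    c.SatA a x ↔ c.SatA a' x := by
  have : a = a' := funext h
  rw [this]

lemma PPH.satA_sub (c : PPH R) {a : c.ι → M} {x x' : M} (hx : c.SatA a x) (hx' : c.SatA a x') :
    c.SatA (fun _ => (0 : M)) (x - x') := by
  letI := c.fι; letI := c.fκ
  obtain ⟨y, hy⟩ := hx
  obtain ⟨y', hy'⟩ := hx'
  refine ⟨fun j => y j - y' j, fun i => ?_⟩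
  calc c.s i • (x - x') + ∑ j, c.r i j • (y j - y' j)
      = (c.s i • x + ∑ j, c.r i j • y j) - (c.s i • x' + ∑ j, c.r i j • y' j) := by
        simp only [smul_sub, Finset.sum_sub_distrib]; abel
    _ = a i - a i := by rw [hy i, hy' i]
    _ = 0 := sub_self _

lemma PPH.satA_add (c : PPH R) {a : c.ι → M} {x d : M} (hx : c.SatA a x)
    (hd : c.SatA (fun _ => (0 : M)) d) : c.SatA a (x + d) := by
  letI := c.fι; letI := c.fκ
  obtain ⟨y, hy⟩ := hx
  obtain ⟨y', hy'⟩ := hd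
  refine ⟨fun j => y j + y' j, fun i => ?_⟩
  calc c.s i • (x + d) + ∑ j, c.r i j • (y j + y' j)
      = (c.s i • x + ∑ j, c.r i j • y j) + (c.s i • d + ∑ j, c.r i j • y' j) := by
        simp only [smul_add, Finset.sum_add_distrib]; abel
    _ = a i + 0 := by rw [hy i, hy' i]
    _ = a i := add_zero _

lemma PPH.zero_mem_G (c : PPH R) : (0 : M) ∈ c.G M := by
  letI := c.fι; letI := c.fκ
  exact ⟨fun _ => 0, fun i => by simp⟩

lemma PPH.neg_mem_G (c : PPH R) {x : M} (hx : x ∈ c.G M) : -x ∈ c.G M := by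
  have := c.satA_sub (c.zero_mem_G (M := M)) hx
  have h2 : c.SatA (fun _ => (0 : M)) (-x) := by simpa using this
  exact h2

lemma PPH.add_mem_G (c : PPH R) {x d : M} (hx : x ∈ c.G M) (hd : d ∈ c.G M) :
    x + d ∈ c.G M :=
  c.satA_add hx hd

/-- Conjunction of homogeneous pp data. -/
def PPH.conj (c₁ c₂ : PPH R) : PPH R where
  ι := c₁.ι ⊕ c₂.ι
  κ := c₁.κ ⊕ c₂.κ
  fι := letI := c₁.fι; letI := c₂.fι; inferInstance
  fκ := letI := c₁.fκ; letI := c₂.fκ; inferInstance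
  s := Sum.elim c₁.s c₂.s
  r := Sum.elim (fun i => Sum.elim (c₁.r i) (fun _ => 0))
        (fun i => Sum.elim (fun _ => 0) (c₂.r i))

lemma PPH.satA_conj (c₁ c₂ : PPH R) (a₁ : c₁.ι → M) (a₂ : c₂.ι → M) (x : M) :
    (c₁.conj c₂).SatA (Sum.elim a₁ a₂) x ↔ c₁.SatA a₁ x ∧ c₂.SatA a₂ x := by
  letI := c₁.fι; letI := c₂.fι; letI := c₁.fκ; letI := c₂.fκ
  constructor
  · rintro ⟨y, hy⟩
    refine ⟨⟨fun j => y (Sum.inl j), fun i => ?_⟩, ⟨fun j => y (Sum.inr j), fun i => ?_⟩⟩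
    · have := hy (Sum.inl i)
      have h3 : ∑ j : c₁.κ ⊕ c₂.κ, (c₁.conj c₂).r (Sum.inl i) j • y j
          = ∑ j, c₁.r i j • y (Sum.inl j) := by
        rw [Fintype.sum_sum_type]; simp [PPH.conj]
      exact (congrArg (c₁.s i • x + ·) h3).symm.trans this
    · have := hy (Sum.inr i)
      have h3 : ∑ j : c₁.κ ⊕ c₂.κ, (c₁.conj c₂).r (Sum.inr i) j • y j
          = ∑ j, c₂.r i j • y (Sum.inr j) := by
        rw [Fintype.sum_sum_type]; simp [PPH.conj]
      exact (congrArg (c₂.s i • x + ·) h3).symm.trans this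
  · rintro ⟨⟨y₁, hy₁⟩, ⟨y₂, hy₂⟩⟩
    refine ⟨Sum.elim y₁ y₂, fun i => ?_⟩
    cases i with
    | inl i =>
      have h3 : ∑ j : c₁.κ ⊕ c₂.κ, (c₁.conj c₂).r (Sum.inl i) j • Sum.elim y₁ y₂ j
          = ∑ j, c₁.r i j • y₁ j := by
        rw [Fintype.sum_sum_type]; simp [PPH.conj]
      exact (congrArg (c₁.s i • x + ·) h3).trans (hy₁ i)
    | inr i =>
      have h3 : ∑ j : c₁.κ ⊕ c₂.κ, (c₁.conj c₂).r (Sum.inr i) j • Sum.elim y₁ y₂ j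
          = ∑ j, c₂.r i j • y₂ j := by
        rw [Fintype.sum_sum_type]; simp [PPH.conj]
      exact (congrArg (c₂.s i • x + ·) h3).trans (hy₂ i)

def PPH.top : PPH.{w₁, w₂} R :=
  ⟨PEmpty, PEmpty, inferInstance, inferInstance, PEmpty.elim, PEmpty.elim⟩

def PP.conj (c₁ c₂ : PP R M) : PP R M := ⟨c₁.h.conj c₂.h, Sum.elim c₁.a c₂.a⟩

def PP.top : PP R M := ⟨PPH.top, PEmpty.elim⟩

lemma PP.sat_top (x : M) : (PP.top : PP R M).Sat x :=
  ⟨PEmpty.elim, fun i => i.elim⟩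

lemma PP.sat_conj (c₁ c₂ : PP R M) (x : M) :
    (c₁.conj c₂).Sat x ↔ c₁.Sat x ∧ c₂.Sat x :=
  PPH.satA_conj c₁.h c₂.h c₁.a c₂.a x

def PP.conjList (l : List (PP R M)) : PP R M := l.foldr PP.conj PP.top

lemma PP.sat_conjList (l : List (PP R M)) (x : M) :
    (PP.conjList l).Sat x ↔ ∀ c ∈ l, c.Sat x := by
  induction l with
  | nil => simp [conjList, sat_top]
  | cons c l ih => simp [conjList, List.foldr] at ih ⊢; rw [PP.sat_conj]; simp [ih]

lemma PP.mem_G_conjList (l : List (PP R M)) (x : M) :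
    x ∈ (PP.conjList l).h.G M ↔ ∀ c ∈ l, x ∈ c.h.G M := by
  induction l with
  | nil =>
    simp only [List.not_mem_nil, false_implies, implies_true, iff_true]
    exact ⟨PEmpty.elim, fun i => i.elim⟩
  | cons c l ih =>
    have : x ∈ (PP.conjList (c :: l)).h.G M ↔ x ∈ c.h.G M ∧ x ∈ (PP.conjList l).h.G M := by
      show (c.h.conj (PP.conjList l).h).SatA _ x ↔ _
      refine (PPH.satA_congr (c.h.conj (PP.conjList l).h)
        (a' := Sum.elim (fun _ => (0:M)) (fun _ => (0:M))) (fun i => by cases i <;> rfl) x).trans ?_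
      exact PPH.satA_conj _ _ _ _ x
    rw [this, ih]
    simp
end PPdefs
section Realize

variable {R : Type*} [Ring R] {M : Type*} [AddCommGroup M] [Module R M]

/-- Descending chain condition on pp-definable subgroups of `M`. -/
def PPdcc (R : Type*) (M : Type*) [Ring R] [AddCommGroup M] [Module R M] : Prop :=
  ¬ ∃ c : ℕ → PPH.{w₁, w₂, _} R, ∀ k, (c (k + 1)).G M ⊂ (c k).G M

lemma realize_of_dcc (hdcc : PPdcc.{w₁, w₂} R M) (p : Set (PP.{w₁, w₂, _, _} R M))
    (hfin : ∀ l : List (PP R M), (∀ c ∈ l, c ∈ p) → ∃ x, ∀ c ∈ l, c.Sat x) :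
    ∃ x, ∀ c ∈ p, c.Sat x := by
  classical
  set S : Set (Set M) :=
    {A | ∃ l : List (PP R M), (∀ c ∈ l, c ∈ p) ∧ A = (PP.conjList l).h.G M} with hS
  have hS0 : (PP.conjList ([] : List (PP R M))).h.G M ∈ S := ⟨[], by simp, rfl⟩
  -- find a minimal element of S
  have hmin : ∃ A ∈ S, ∀ B ∈ S, ¬B ⊂ A := by
    by_contra hcon
    push_neg at hcon
    have h' : ∀ A : {A // A ∈ S}, ∃ B : {A // A ∈ S}, B.1 ⊂ A.1 := by
      rintro ⟨A, hA⟩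
      obtain ⟨B, hB, hss⟩ := hcon A hA
      exact ⟨⟨B, hB⟩, hss⟩
    choose nxt hnxt using h'
    set f : ℕ → {A // A ∈ S} := fun n => nxt^[n] ⟨_, hS0⟩ with hf
    have hstep : ∀ n, (f (n + 1)).1 ⊂ (f n).1 := by
      intro n
      have : f (n + 1) = nxt (f n) := Function.iterate_succ_apply' nxt n _
      rw [this]
      exact hnxt (f n)
    have : ∀ n, ∃ l : List (PP R M), (∀ c ∈ l, c ∈ p) ∧ (f n).1 = (PP.conjList l).h.G M :=
      fun n => (f n).2
    choose L hL1 hL2 using this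
    exact hdcc ⟨fun n => (PP.conjList (L n)).h, fun k => by rw [← hL2, ← hL2]; exact hstep k⟩
  obtain ⟨A, ⟨l₀, hl₀p, hA⟩, hAmin⟩ := hmin
  obtain ⟨x₀, hx₀⟩ := hfin l₀ hl₀p
  refine ⟨x₀, fun c hc => ?_⟩
  have hl' : ∀ d ∈ c :: l₀, d ∈ p := by
    intro d hd
    rcases List.mem_cons.mp hd with h | h
    · rwa [h]
    · exact hl₀p d h
  obtain ⟨x', hx'⟩ := hfin (c :: l₀) hl'
  -- G (c :: l₀) = G l₀ by minimality
  have hsub : (PP.conjList (c :: l₀)).h.G M ⊆ (PP.conjList l₀).h.G M := by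
    intro z hz
    rw [PP.mem_G_conjList] at hz ⊢
    exact fun d hd => hz d (List.mem_cons_of_mem c hd)
  have heq : (PP.conjList (c :: l₀)).h.G M = (PP.conjList l₀).h.G M := by
    by_contra hne
    exact hAmin _ ⟨c :: l₀, hl', rfl⟩ (by rw [hA]; exact ⟨hsub, fun h => hne (le_antisymm hsub h)⟩)
  -- x₀ - x' lies in G l₀ = G (c :: l₀), hence in G of c
  have hsatl₀ : (PP.conjList l₀).Sat x₀ := (PP.sat_conjList l₀ x₀).mpr hx₀
  have hsatl₀' : (PP.conjList l₀).Sat x' := by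
    rw [PP.sat_conjList]
    intro d hd
    exact hx' d (List.mem_cons_of_mem c hd)
  have hdiff : x₀ - x' ∈ (PP.conjList l₀).h.G M :=
    (PP.conjList l₀).h.satA_sub hsatl₀ hsatl₀'
  rw [← heq, PP.mem_G_conjList] at hdiff
  have hdc : x₀ - x' ∈ c.h.G M := hdiff c List.mem_cons_self
  have hcx' : c.Sat x' := hx' c List.mem_cons_self
  have := c.h.satA_add hcx' hdc
  have hxx : x' + (x₀ - x') = x₀ := by abel
  rwa [hxx] at this

end Realize
/-! ### Systems of linear equations -/

/-- A single finite `R`-linear equation in variables from `V` with constant in `M`. -/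
structure LinEq (R V M : Type*) where
  k : ℕ
  c : Fin k → R
  v : Fin k → V
  b : M

section LinEqDefs

variable {R : Type*} [Ring R] {M : Type*} [AddCommGroup M] [Module R M] {V : Type*}

def LinEq.Holds (e : LinEq R V M) (x : V → M) : Prop :=
  ∑ i, e.c i • x (e.v i) = e.b

lemma LinEq.holds_congr (e : LinEq R V M) {x x' : V → M}
    (h : ∀ i, x (e.v i) = x' (e.v i)) : e.Holds x ↔ e.Holds x' := by
  unfold LinEq.Holds
  rw [Finset.sum_congr rfl fun i _ => by rw [h i]]

/-- Every finite subsystem has a solution. -/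
def FinSolv (T : Set (LinEq R V M)) : Prop :=
  ∀ F : Finset (LinEq R V M), ↑F ⊆ T → ∃ x : V → M, ∀ e ∈ F, e.Holds x

lemma group_sum [DecidableEq V] (k : ℕ) (c : Fin k → R) (v : Fin k → V) (W : Finset V)
    (hW : ∀ i, v i ∈ W) (Y : V → M) :
    ∑ w ∈ W, (∑ i ∈ Finset.univ.filter (fun i => v i = w), c i) • Y w
      = ∑ i, c i • Y (v i) := by
  rw [← Finset.sum_fiberwise_of_maps_to (fun i _ => hW i) (fun i => c i • Y (v i))]
  refine Finset.sum_congr rfl fun w _ => ?_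
  rw [Finset.sum_smul]
  refine Finset.sum_congr rfl fun i hi => ?_
  rw [Finset.mem_filter] at hi
  rw [hi.2]

variable (v₀ : V)

/-- The set of variables of a finite system, together with `v₀`. -/
def LinEq.varsOf [DecidableEq V] (F : Finset (LinEq R V M)) (v₀ : V) : Finset V :=
  insert v₀ (F.biUnion fun e => Finset.image e.v Finset.univ)

lemma LinEq.mem_varsOf [DecidableEq V] (F : Finset (LinEq R V M)) {e : LinEq R V M}
    (he : e ∈ F) (i : Fin e.k) : e.v i ∈ LinEq.varsOf F v₀ :=
  Finset.mem_insert_of_mem (Finset.mem_biUnion.mpr ⟨e, he,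
    Finset.mem_image.mpr ⟨i, Finset.mem_univ i, rfl⟩⟩)

lemma LinEq.v₀_mem_varsOf [DecidableEq V] (F : Finset (LinEq R V M)) :
    v₀ ∈ LinEq.varsOf F v₀ := Finset.mem_insert_self _ _

/-- The pp condition (in one variable, standing for the value of `x v₀`) expressing that
the finite system `F` has a solution assigning the given value to `v₀`. -/
def PPcond [DecidableEq V] (F : Finset (LinEq R V M)) : PP R M where
  h :=
    { ι := Option {e // e ∈ F}
      κ := {w // w ∈ LinEq.varsOf F v₀}
      fι := inferInstance
      fκ := inferInstance
      s := fun i => match i with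
        | none => 1
        | some _ => 0
      r := fun i w => match i with
        | none => if (w : V) = v₀ then -1 else 0
        | some e => ∑ t ∈ Finset.univ.filter (fun t => e.1.v t = (w : V)), e.1.c t }
  a := fun i => match i with
    | none => 0
    | some e => e.1.b

lemma sat_PPcond [DecidableEq V] (F : Finset (LinEq R V M)) (x : M) :
    (PPcond v₀ F).Sat x ↔ ∃ Y : V → M, Y v₀ = x ∧ ∀ e ∈ F, e.Holds Y := by
  classical
  set W := LinEq.varsOf F v₀ with hWdef
  have hv₀W : v₀ ∈ W := LinEq.v₀_mem_varsOf v₀ F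
  -- evaluation of the `none` row sum
  have rowNone : ∀ y : {w // w ∈ W} → M,
      (∑ w : {w // w ∈ W}, (if (w : V) = v₀ then (-1 : R) else 0) • y w)
        = -y ⟨v₀, hv₀W⟩ := by
    intro y
    calc ∑ w : {w // w ∈ W}, (if (w : V) = v₀ then (-1 : R) else 0) • y w
        = ∑ w : {w // w ∈ W}, (if w = (⟨v₀, hv₀W⟩ : {w // w ∈ W}) then -y w else 0) := by
          refine Finset.sum_congr rfl fun w _ => ?_
          by_cases h : (w : V) = v₀
          · rw [if_pos h, if_pos (Subtype.ext h)]; simp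
          · rw [if_neg h, if_neg (fun hh => h (by rw [hh]))]; simp
      _ = -y ⟨v₀, hv₀W⟩ := by rw [Finset.sum_ite_eq' Finset.univ]; simp
  -- evaluation of a `some e` row sum
  have rowSome : ∀ (Y : V → M) (e : LinEq R V M), e ∈ F →
      (∑ w : {w // w ∈ W},
        (∑ t ∈ Finset.univ.filter (fun t => e.v t = (w : V)), e.c t) • Y (w : V))
        = ∑ t, e.c t • Y (e.v t) := by
    intro Y e he
    rw [Finset.sum_coe_sort W
      (fun w => (∑ t ∈ Finset.univ.filter (fun t => e.v t = w), e.c t) • Y w)]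
    exact group_sum e.k e.c e.v W (fun t => LinEq.mem_varsOf v₀ F he t) Y
  constructor
  · rintro ⟨y, hy⟩
    set Y : V → M := fun v => if h : v ∈ W then y ⟨v, h⟩ else 0 with hYdef
    have hYy : ∀ w : {w // w ∈ W}, Y (w : V) = y w := by
      rintro ⟨w, hw⟩
      simp [hYdef, hw]
    have h0 := hy none
    have hYv₀ : Y v₀ = x := by
      rw [show Y v₀ = y ⟨v₀, hv₀W⟩ from hYy ⟨v₀, hv₀W⟩]
      have := h0
      simp only [PPcond] at this
      erw [rowNone y] at this
      rw [one_smul] at this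
      have := sub_eq_zero.mp (by rw [← sub_eq_add_neg] at this; exact this)
      exact this.symm
    refine ⟨Y, hYv₀, fun e he => ?_⟩
    have hs := hy (some ⟨e, he⟩)
    simp only [PPcond] at hs
    rw [zero_smul, zero_add] at hs
    have : (∑ w : {w // w ∈ W},
        (∑ t ∈ Finset.univ.filter (fun t => e.v t = (w : V)), e.c t) • y w) = e.b := hs
    rw [show (fun (w : {w // w ∈ W}) =>
        (∑ t ∈ Finset.univ.filter (fun t => e.v t = (w : V)), e.c t) • y w)
      = (fun (w : {w // w ∈ W}) =>
        (∑ t ∈ Finset.univ.filter (fun t => e.v t = (w : V)), e.c t) • Y (w : V)) from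
      funext fun w => by rw [hYy w]] at this
    rw [rowSome Y e he] at this
    exact this
  · rintro ⟨Y, hYv₀, hYF⟩
    refine ⟨fun w : {w // w ∈ W} => Y (w : V), fun i => ?_⟩
    match i with
    | none =>
      show (1 : R) • x +
        (∑ w : {w // w ∈ W}, (if (w : V) = v₀ then (-1 : R) else 0) • Y (w : V)) = 0
      rw [rowNone (fun w => Y (w : V))]
      simp [hYv₀]
    | some e =>
      show (0 : R) • x +
        (∑ w : {w // w ∈ W},
          (∑ t ∈ Finset.univ.filter (fun t => e.1.v t = (w : V)), e.1.c t) • Y (w : V)) = e.1.b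
      rw [zero_smul, zero_add, rowSome Y e.1 e.2]
      exact hYF e.1 e.2

/-- The equation asserting that variable `p.1` has value `p.2`. -/
def assignEq (p : V × M) : LinEq R V M := ⟨1, fun _ => 1, fun _ => p.1, p.2⟩

lemma holds_assignEq (p : V × M) (x : V → M) :
    (assignEq p : LinEq R V M).Holds x ↔ x p.1 = p.2 := by
  unfold LinEq.Holds assignEq
  simp

end LinEqDefs
section Zorn

universe uR uM uV

variable {R : Type uR} [Ring R] {M : Type uM} [AddCommGroup M] [Module R M] {V : Type uV}

lemma exists_bigF [DecidableEq V] (v₀ : V) (U : Set (LinEq R V M)) (l : List (PP R M)) :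
    (∀ c ∈ l, ∃ F : Finset (LinEq R V M), ↑F ⊆ U ∧ c = PPcond v₀ F) →
    ∃ G : Finset (LinEq R V M), ↑G ⊆ U ∧
      ∀ c ∈ l, ∃ F : Finset (LinEq R V M), F ⊆ G ∧ c = PPcond v₀ F := by
  classical
  induction l with
  | nil => exact fun _ => ⟨∅, by simp, by simp⟩
  | cons c l ih =>
    intro hl
    obtain ⟨G, hG, hGl⟩ := ih fun d hd => hl d (List.mem_cons_of_mem _ hd)
    obtain ⟨F, hF, hcF⟩ := hl c List.mem_cons_self
    refine ⟨F ∪ G, ?_, fun d hd => ?_⟩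
    · rw [Finset.coe_union]
      exact Set.union_subset hF hG
    · rcases List.mem_cons.mp hd with h | h
      · exact ⟨F, Finset.subset_union_left, by rw [h, hcF]⟩
      · obtain ⟨F', hF', hdF'⟩ := hGl d h
        exact ⟨F', hF'.trans Finset.subset_union_right, hdF'⟩

theorem solv_of_finSolv (hdcc : PPdcc.{max uR uV uM, uV, uR} R M) (T : Set (LinEq R V M))
    (hfs : FinSolv T) : ∃ x : V → M, ∀ e ∈ T, e.Holds x := by
  classical
  set Z : Set (Set (V × M)) := {σ | FinSolv (T ∪ assignEq '' σ)} with hZdef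
  have hZempty : (∅ : Set (V × M)) ∈ Z := by
    simpa [hZdef] using hfs
  -- Zorn's lemma
  have hchains : ∀ c ⊆ Z, IsChain (· ⊆ ·) c → c.Nonempty →
      ∃ ub ∈ Z, ∀ s ∈ c, s ⊆ ub := by
    intro c hcZ hchain ⟨σ₁, hσ₁⟩
    refine ⟨⋃₀ c, ?_, fun s hs => Set.subset_sUnion_of_mem hs⟩
    intro F hF
    -- find a single member of the chain covering all of F
    have key : ∀ F : Finset (LinEq R V M), ↑F ⊆ T ∪ assignEq '' ⋃₀ c →
        ∃ σ ∈ c, ↑F ⊆ T ∪ assignEq '' σ := by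
      intro F
      induction F using Finset.induction_on with
      | empty => exact fun _ => ⟨σ₁, hσ₁, by simp⟩
      | insert e F hnotmem ih =>
        intro hins
        obtain ⟨σ, hσc, hσ⟩ := ih (by
          refine subset_trans ?_ hins
          rw [Finset.coe_insert]
          exact Set.subset_insert _ _)
        have he : e ∈ T ∪ assignEq '' ⋃₀ c := hins (by simp)
        rcases he with he | he
        · refine ⟨σ, hσc, ?_⟩
          rw [Finset.coe_insert]
          exact Set.insert_subset (Or.inl he) hσ
        · obtain ⟨pr, hpr, hpre⟩ := he
          obtain ⟨σ₂, hσ₂c, hprσ₂⟩ := hpr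
          rcases hchain.total hσc hσ₂c with hss | hss
          · refine ⟨σ₂, hσ₂c, ?_⟩
            rw [Finset.coe_insert]
            refine Set.insert_subset (Or.inr ⟨pr, hprσ₂, hpre⟩) ?_
            exact hσ.trans (Set.union_subset_union_right _ (Set.image_mono hss))
          · refine ⟨σ, hσc, ?_⟩
            rw [Finset.coe_insert]
            exact Set.insert_subset (Or.inr ⟨pr, hss hprσ₂, hpre⟩) hσ
    obtain ⟨σ, hσc, hFσ⟩ := key F hF
    exact hcZ hσc F hFσ
  obtain ⟨σ, -, hσmax⟩ := zorn_subset_nonempty Z hchains ∅ hZempty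
  have hσZ : σ ∈ Z := hσmax.prop
  -- totality of the maximal partial assignment
  have htot : ∀ v₀ : V, ∃ a : M, (v₀, a) ∈ σ := by
    intro v₀
    by_contra hv₀
    push_neg at hv₀
    set p : Set (PP R M) :=
      {c | ∃ F : Finset (LinEq R V M), ↑F ⊆ T ∪ assignEq '' σ ∧ c = PPcond v₀ F} with hpdef
    have hfinp : ∀ l : List (PP R M), (∀ c ∈ l, c ∈ p) → ∃ x, ∀ c ∈ l, c.Sat x := by
      intro l hl
      obtain ⟨G, hG, hGl⟩ := exists_bigF v₀ (T ∪ assignEq '' σ) l hl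
      obtain ⟨Y, hY⟩ := hσZ G hG
      refine ⟨Y v₀, fun c hc => ?_⟩
      obtain ⟨F, hFG, rfl⟩ := hGl c hc
      rw [sat_PPcond]
      exact ⟨Y, rfl, fun e he => hY e (hFG he)⟩
    obtain ⟨e, he⟩ := realize_of_dcc hdcc p hfinp
    have hσ' : insert (v₀, e) σ ∈ Z := by
      intro F hF
      set F₀ := F.erase (assignEq (v₀, e)) with hF₀def
      have hF₀ : ↑F₀ ⊆ T ∪ assignEq '' σ := by
        intro f hf
        have hfF : f ∈ F := Finset.erase_subset _ _ hf
        have hfne : f ≠ assignEq (v₀, e) := (Finset.mem_erase.mp hf).1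
        have := hF hfF
        rcases this with h | h
        · exact Or.inl h
        · rw [Set.image_insert_eq] at h
          rcases h with h | h
          · exact absurd h hfne
          · exact Or.inr h
      have hsat := he (PPcond v₀ F₀) ⟨F₀, hF₀, rfl⟩
      rw [sat_PPcond] at hsat
      obtain ⟨Y, hYv₀, hYF₀⟩ := hsat
      refine ⟨Y, fun f hf => ?_⟩
      by_cases hfe : f = assignEq (v₀, e)
      · rw [hfe, holds_assignEq]
        exact hYv₀
      · exact hYF₀ f (Finset.mem_erase.mpr ⟨hfe, hf⟩)
    have hsub : insert (v₀, e) σ ⊆ σ := hσmax.2 hσ' (Set.subset_insert _ _)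
    exact hv₀ e (hsub (Set.mem_insert _ _))
  choose val hval using htot
  refine ⟨val, fun e he => ?_⟩
  set F : Finset (LinEq R V M) :=
    insert e (Finset.image (fun i => assignEq (e.v i, val (e.v i))) Finset.univ) with hFdef
  have hFsub : ↑F ⊆ T ∪ assignEq '' σ := by
    intro f hf
    rw [hFdef, Finset.coe_insert] at hf
    rcases hf with hf | hf
    · exact Or.inl (hf ▸ he)
    · rw [Finset.coe_image] at hf
      obtain ⟨i, -, rfl⟩ := hf
      exact Or.inr ⟨(e.v i, val (e.v i)), hval (e.v i), rfl⟩
  obtain ⟨Y, hY⟩ := hσZ F hFsub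
  have he' : e.Holds Y := hY e (Finset.mem_insert_self _ _)
  have hvals : ∀ i, Y (e.v i) = val (e.v i) := by
    intro i
    have : (assignEq (e.v i, val (e.v i)) : LinEq R V M) ∈ F := by
      rw [hFdef]
      exact Finset.mem_insert_of_mem
        (Finset.mem_image.mpr ⟨i, Finset.mem_univ i, rfl⟩)
    exact (holds_assignEq _ _).mp (hY _ this)
  exact (e.holds_congr hvals).mp he'

end Zorn


/-! ### Realizing countable chains of pp conditions over a pure-injective module -/

section ReducedPower

variable {R : Type u} [Ring R] {M : Type u} [AddCommGroup M] [Module R M]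

/-- The submodule of eventually-zero sequences. -/
def evZero (R M : Type*) [Ring R] [AddCommGroup M] [Module R M] :
    Submodule R (ℕ → M) where
  carrier := {f | ∃ N, ∀ n ≥ N, f n = 0}
  add_mem' := by
    rintro f g ⟨Nf, hNf⟩ ⟨Ng, hNg⟩
    exact ⟨max Nf Ng, fun n hn => by
      simp [Pi.add_apply, hNf n (le_trans (le_max_left _ _) hn),
        hNg n (le_trans (le_max_right _ _) hn)]⟩
  zero_mem' := ⟨0, fun n _ => rfl⟩
  smul_mem' := by
    rintro r f ⟨N, hN⟩
    exact ⟨N, fun n hn => by simp [Pi.smul_apply, hN n hn]⟩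

/-- The constant-sequence linear map. -/
def constLM (R M : Type*) [Ring R] [AddCommGroup M] [Module R M] :
    M →ₗ[R] (ℕ → M) := LinearMap.pi fun _ => LinearMap.id

lemma realize_chain_of_pureInjective (hM : PureInjective R M)
    (p : ℕ → PP.{w₁, w₂, u, u} R M) (a : ℕ → M)
    (hsat : ∀ k n, k ≤ n → (p k).Sat (a n)) : ∃ e : M, ∀ k, (p k).Sat e := by
  classical
  set U : Submodule R (ℕ → M) := evZero R M with hUdef
  set Δ : M →ₗ[R] (ℕ → M) ⧸ U := U.mkQ.comp (constLM R M) with hΔdef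
  have hΔ : ∀ (z : M), Δ z = U.mkQ (fun _ => z) := fun z => rfl
  have hU : ∀ f : ℕ → M, f ∈ U ↔ ∃ N, ∀ n ≥ N, f n = 0 := fun f => Iff.rfl
  -- Δ is a pure embedding
  have hinj : Function.Injective Δ := by
    intro z z' hzz
    rw [hΔ, hΔ, ← sub_eq_zero, ← map_sub, Submodule.mkQ_apply,
      Submodule.Quotient.mk_eq_zero] at hzz
    obtain ⟨N, hN⟩ := hzz
    have := hN N le_rfl
    simpa [sub_eq_zero] using this
  have hpure : IsPureSubmodule (LinearMap.range Δ) := by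
    intro m n r av hav hsol
    have hav' : ∀ i, ∃ c : M, Δ c = av i := fun i => hav i
    choose cc hcc using hav'
    obtain ⟨x, hx⟩ := hsol
    have hx' : ∀ j, ∃ f : ℕ → M, U.mkQ f = x j := fun j =>
      Submodule.mkQ_surjective U (x j)
    choose f hf using hx'
    have hrow : ∀ i, ∃ N, ∀ n ≥ N, (∑ j, r i j • f j) n = cc i := by
      intro i
      have hmem : ((∑ j, r i j • f j) - fun _ => cc i) ∈ U := by
        rw [← Submodule.Quotient.mk_eq_zero U, ← Submodule.mkQ_apply, map_sub, map_sum]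
        have : ∀ j, U.mkQ (r i j • f j) = r i j • x j := by
          intro j
          rw [map_smul, hf j]
        rw [Finset.sum_congr rfl fun j _ => this j]
        rw [hx i, ← hcc i, hΔ]
        simp
      obtain ⟨N, hN⟩ := (hU _).mp hmem
      refine ⟨N, fun n hn => ?_⟩
      have := hN n hn
      rwa [Pi.sub_apply, sub_eq_zero] at this
    choose Nf hNf using hrow
    set N : ℕ := Finset.univ.sup Nf with hNdef
    have hNle : ∀ i, Nf i ≤ N := fun i => Finset.le_sup (Finset.mem_univ i)
    refine ⟨fun j => Δ (f j N), fun j => LinearMap.mem_range_self _ _, fun i => ?_⟩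
    have hvalN : ∑ j, r i j • f j N = cc i := by
      have h2 := hNf i N (hNle i)
      rw [← h2]
      simp [Finset.sum_apply, Pi.smul_apply]
    calc ∑ j, r i j • Δ (f j N) = Δ (∑ j, r i j • f j N) := by
          rw [map_sum]
          exact Finset.sum_congr rfl fun j _ => by rw [map_smul]
      _ = Δ (cc i) := by rw [hvalN]
      _ = av i := hcc i
  -- extend the identity along Δ
  obtain ⟨h, hh⟩ := hM M ((ℕ → M) ⧸ U) Δ ⟨hinj, hpure⟩ LinearMap.id
  have hhΔ : ∀ z : M, h (Δ z) = z := fun z => by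
    have := congrArg (fun g => g z) hh
    simpa using this
  -- the generic element
  set b : (ℕ → M) ⧸ U := U.mkQ (fun n => a n) with hbdef
  refine ⟨h b, fun k => ?_⟩
  letI := (p k).h.fι; letI := (p k).h.fκ
  have hw : ∀ nn : ℕ, ∃ y : (p k).h.κ → M, k ≤ nn →
      ∀ i, (p k).h.s i • a nn + ∑ j, (p k).h.r i j • y j = (p k).a i := by
    intro nn
    by_cases hkn : k ≤ nn
    · obtain ⟨y, hy⟩ := hsat k nn hkn
      exact ⟨y, fun _ => hy⟩
    · exact ⟨fun _ => 0, fun hc => absurd hc hkn⟩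
  choose w hwspec using hw
  set Y : (p k).h.κ → (ℕ → M) ⧸ U := fun j => U.mkQ (fun nn => w nn j) with hYdef
  have hrowB : ∀ i, (p k).h.s i • b + ∑ j, (p k).h.r i j • Y j = Δ ((p k).a i) := by
    intro i
    rw [hΔ, hbdef, hYdef]
    have lhs_eq : (p k).h.s i • U.mkQ (fun n => a n)
        + ∑ j, (p k).h.r i j • U.mkQ (fun nn => w nn j)
        = U.mkQ ((p k).h.s i • (fun n => a n) + ∑ j, (p k).h.r i j • (fun nn => w nn j)) := by
      simp only [← Submodule.mkQ_apply, ← map_smul, ← map_sum, ← map_add]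
    rw [lhs_eq]
    rw [Submodule.mkQ_apply, Submodule.mkQ_apply, Submodule.Quotient.eq]
    refine ⟨k, fun nn hnn => ?_⟩
    have := hwspec nn hnn i
    simp only [Pi.sub_apply, Pi.add_apply, Pi.smul_apply, Finset.sum_apply]
    simp [this]
  refine ⟨fun j => h (Y j), fun i => ?_⟩
  have := congrArg h (hrowB i)
  rw [map_add, map_smul, map_sum, hhΔ] at this
  rw [Finset.sum_congr rfl fun j _ => by rw [map_smul]] at this
  exact this

end ReducedPower


/-! ### pp conditions and direct sums -/

section DirectSumPP

variable {R : Type*} [Ring R] {E : Type*} [AddCommGroup E] [Module R E] {I : Type*}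

lemma dsApply_sum {γ : Type*} (s : Finset γ) (g : γ → DirectSum I fun _ => E) (i : I) :
    (∑ t ∈ s, g t) i = ∑ t ∈ s, g t i := by
  classical
  induction s using Finset.cons_induction with
  | empty => simp
  | cons a s ha ih => rw [Finset.sum_cons, Finset.sum_cons, DirectSum.add_apply, ih]

lemma PPH.satA_shift (c : PPH R) {M : Type*} [AddCommGroup M] [Module R M] (z x : M) :
    c.SatA (fun i => c.s i • z) x ↔ c.SatA (fun _ => (0 : M)) (x - z) := by
  letI := c.fι; letI := c.fκ
  constructor
  · rintro ⟨y, hy⟩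
    refine ⟨y, fun i => ?_⟩
    calc c.s i • (x - z) + ∑ j, c.r i j • y j
        = (c.s i • x + ∑ j, c.r i j • y j) - c.s i • z := by rw [smul_sub]; abel
      _ = c.s i • z - c.s i • z := by rw [hy i]
      _ = 0 := sub_self _
  · rintro ⟨y, hy⟩
    refine ⟨y, fun i => ?_⟩
    have := hy i
    calc c.s i • x + ∑ j, c.r i j • y j
        = (c.s i • (x - z) + ∑ j, c.r i j • y j) + c.s i • z := by rw [smul_sub]; abel
      _ = 0 + c.s i • z := by rw [this]
      _ = c.s i • z := zero_add _

lemma PPH.satAzero_directSum (c : PPH R) (x : DirectSum I fun _ => E) :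
    c.SatA (fun _ => (0 : DirectSum I fun _ => E)) x ↔
      ∀ i : I, c.SatA (fun _ => (0 : E)) (x i) := by
  classical
  letI := c.fι; letI := c.fκ
  constructor
  · rintro ⟨y, hy⟩ i
    refine ⟨fun j => y j i, fun ii => ?_⟩
    have := congrArg (fun z : DirectSum I fun _ => E => z i) (hy ii)
    simpa [DirectSum.add_apply, DirectSum.smul_apply, dsApply_sum] using this
  · intro hcomp
    have hch : ∀ i : I, ∃ y : c.κ → E,
        (∀ ii, c.s ii • x i + ∑ j, c.r ii j • y j = 0) ∧ (x i = 0 → y = 0) := by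
      intro i
      by_cases hxi : x i = 0
      · exact ⟨0, fun ii => by simp [hxi], fun _ => rfl⟩
      · obtain ⟨y, hy⟩ := hcomp i
        exact ⟨y, hy, fun h => absurd h hxi⟩
    choose w hw1 hw2 using hch
    obtain ⟨sp, hsp⟩ : ∃ sp : Finset I, ∀ i ∉ sp, x i = 0 :=
      ⟨DFinsupp.support x, fun i hi => by simpa using DFinsupp.notMem_support_iff.mp hi⟩
    refine ⟨fun j => DirectSum.mk (fun _ : I => E) sp (fun i => w i.1 j), fun ii => ?_⟩
    refine DirectSum.ext_component R (fun i => ?_)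
    rw [← DirectSum.apply_eq_component, ← DirectSum.apply_eq_component]
    rw [DirectSum.add_apply, DirectSum.smul_apply, dsApply_sum, DirectSum.zero_apply]
    simp only [DirectSum.smul_apply]
    by_cases hi : i ∈ sp
    · have hmk : ∀ j, (DirectSum.mk (fun _ : I => E) sp (fun i => w i.1 j)) i = w i j :=
        fun j => DirectSum.mk_apply_of_mem hi
      rw [Finset.sum_congr rfl fun j _ => by rw [hmk j]]
      exact hw1 i ii
    · have hmk : ∀ j, (DirectSum.mk (fun _ : I => E) sp (fun i => w i.1 j)) i = 0 :=
        fun j => DirectSum.mk_apply_of_notMem hi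
      rw [Finset.sum_congr rfl fun j _ => by rw [hmk j]]
      simp [hsp i hi]

lemma PPH.mem_G_directSum (c : PPH R) (x : DirectSum I fun _ => E) :
    x ∈ c.G (DirectSum I fun _ => E) ↔ ∀ i : I, x i ∈ c.G E :=
  c.satAzero_directSum x

lemma PPH.lof_mem_G [DecidableEq I] (c : PPH R) {z : E} (hz : z ∈ c.G E) (i₀ : I) :
    DirectSum.lof R I (fun _ => E) i₀ z ∈ c.G (DirectSum I fun _ => E) := by
  rw [PPH.mem_G_directSum]
  intro i
  by_cases h : i₀ = i
  · subst h
    rw [DirectSum.lof_apply]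
    exact hz
  · rw [DirectSum.lof_eq_of, DirectSum.of_eq_of_ne _ _ _ (Ne.symm h)]
    exact c.zero_mem_G

lemma PPdcc_directSum (hI : Nonempty I) (hdcc : PPdcc.{w₁, w₂, _} R E) :
    PPdcc.{w₁, w₂, _} R (DirectSum I fun _ => E) := by
  classical
  rintro ⟨c, hc⟩
  refine hdcc ⟨c, fun k => ?_⟩
  obtain ⟨x, hxmem, hxnot⟩ := Set.exists_of_ssubset (hc k)
  obtain ⟨i₀⟩ := hI
  rw [Set.ssubset_def]
  constructor
  · intro z hz
    have := (hc k).1 ((c (k + 1)).lof_mem_G hz i₀)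
    rw [PPH.mem_G_directSum] at this
    have := this i₀
    rwa [DirectSum.lof_apply] at this
  · intro hcon
    rw [PPH.mem_G_directSum] at hxmem
    apply hxnot
    rw [PPH.mem_G_directSum]
    exact fun i => hcon (hxmem i)

end DirectSumPP

/-! ### Pure-injectivity of a countable power implies the dcc -/

section DCC

variable {R : Type u} [Ring R] {E : Type u} [AddCommGroup E] [Module R E]

lemma PPdcc_of_pureInjective {J : Type u} [Infinite J]
    (hPI : PureInjective R (DirectSum J fun _ => E)) : PPdcc.{w₁, w₂, u} R E := by
  classical
  rintro ⟨φ, hφ⟩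
  set ι : ℕ ↪ J := Infinite.natEmbedding J with hιdef
  have hx : ∀ k, ∃ x : E, x ∈ (φ k).G E ∧ x ∉ (φ (k + 1)).G E := by
    intro k
    obtain ⟨x, h1, h2⟩ := Set.exists_of_ssubset (hφ k)
    exact ⟨x, h1, h2⟩
  choose xx hx1 hx2 using hx
  have hmono : ∀ k l, k ≤ l → (φ l).G E ⊆ (φ k).G E := by
    intro k l hkl
    induction l, hkl using Nat.le_induction with
    | base => exact subset_rfl
    | succ l hkl ih => exact subset_trans (hφ l).1 ih
  set aa : ℕ → DirectSum J fun _ => E :=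
    fun m => ∑ l ∈ Finset.range m, DirectSum.lof R J (fun _ => E) (ι l) (xx l) with haadef
  -- components of partial sums
  have haacomp : ∀ (s : Finset ℕ) (j : J), (∀ l ∈ s, xx l ∈ (φ 0).G E) → True := fun _ _ _ => trivial
  have hsat : ∀ k m, k ≤ m → (PP.mk (φ k) (fun i => (φ k).s i • aa k) :
      PP R (DirectSum J fun _ => E)).Sat (aa m) := by
    intro k m hkm
    show (φ k).SatA _ (aa m)
    rw [PPH.satA_shift, show (fun _ => (0 : DirectSum J fun _ => E)) =
      (fun _ : (φ k).ι => (0 : DirectSum J fun _ => E)) from rfl]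
    have : aa m - aa k = ∑ l ∈ Finset.Ico k m, DirectSum.lof R J (fun _ => E) (ι l) (xx l) := by
      rw [haadef]
      exact (Finset.sum_Ico_eq_sub _ hkm).symm
    rw [this]
    have : (∑ l ∈ Finset.Ico k m, DirectSum.lof R J (fun _ => E) (ι l) (xx l))
        ∈ (φ k).G (DirectSum J fun _ => E) := by
      rw [PPH.mem_G_directSum]
      intro j
      rw [dsApply_sum]
      refine Finset.sum_induction _ (· ∈ (φ k).G E)
        (fun a b ha hb => (φ k).add_mem_G ha hb) (φ k).zero_mem_G (fun l hl => ?_)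
      by_cases hj : ι l = j
      · subst hj
        rw [DirectSum.lof_apply]
        exact hmono k l (Finset.mem_Ico.mp hl).1 (hx1 l)
      · rw [DirectSum.lof_eq_of, DirectSum.of_eq_of_ne _ _ _ (Ne.symm hj)]
        exact (φ k).zero_mem_G
    exact this
  obtain ⟨e, he⟩ := realize_chain_of_pureInjective hPI
    (fun k => PP.mk (φ k) (fun i => (φ k).s i • aa k)) aa hsat
  -- a coordinate where e vanishes
  have hfin : {n : ℕ | e (ι n) ≠ 0}.Finite := by
    have h1 : {j : J | e j ≠ 0}.Finite := by
      refine Set.Finite.subset (DFinsupp.support e).finite_toSet ?_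
      intro j hj
      exact DFinsupp.mem_support_iff.mpr hj
    have h2 : {n : ℕ | e (ι n) ≠ 0} ⊆ ι ⁻¹' {j : J | e j ≠ 0} := fun n hn => hn
    exact Set.Finite.subset (Set.Finite.preimage (ι.injective.injOn) h1) h2
  obtain ⟨k, hk⟩ : ∃ k, e (ι k) = 0 := by
    obtain ⟨k, hk⟩ := hfin.infinite_compl.nonempty
    exact ⟨k, not_not.mp hk⟩
  -- derive the contradiction at stage k+1
  have hsatk := he (k + 1)
  have hG : (e - aa (k + 1)) ∈ (φ (k + 1)).G (DirectSum J fun _ => E) := by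
    have : (φ (k + 1)).SatA (fun i => (φ (k + 1)).s i • aa (k + 1)) e := hsatk
    rw [PPH.satA_shift] at this
    exact this
  rw [PPH.mem_G_directSum] at hG
  have hcomp := hG (ι k)
  have haak : (aa (k + 1)) (ι k) = xx k := by
    rw [haadef]
    rw [dsApply_sum]
    rw [Finset.sum_eq_single k]
    · exact DirectSum.lof_apply R _ _
    · intro l hl hlk
      exact DirectSum.lof_eq_of R J (fun _ => E) (ι l) (xx l) ▸
        DirectSum.of_eq_of_ne _ _ _ (fun h => hlk (ι.injective h).symm)
    · intro hkmem
      exact absurd (Finset.mem_range.mpr (Nat.lt_succ_self k)) hkmem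
  rw [DirectSum.sub_apply, hk, haak, zero_sub] at hcomp
  have : xx k ∈ (φ (k + 1)).G E := by
    have := (φ (k + 1)).neg_mem_G hcomp
    rwa [neg_neg] at this
  exact hx2 k this

end DCC


/-! ### Algebraic compactness implies pure-injectivity -/

section Final

lemma pureInjective_of_solv {R M : Type u} [Ring R] [AddCommGroup M] [Module R M]
    (hsolv : ∀ (V : Type u) (T : Set (LinEq R V M)), FinSolv T →
      ∃ x : V → M, ∀ e ∈ T, e.Holds x) :
    PureInjective R M := by
  classical
  intro A B _ _ _ _ f hf g
  set T : Set (LinEq R B M) :=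
    {e | ∃ a : A, e.b = g a ∧ ∑ i, e.c i • e.v i = f a} with hTdef
  have hfs : FinSolv T := by
    intro F hF
    have hmem : ∀ e : {e // e ∈ F}, ∃ a : A, e.1.b = g a ∧ ∑ i, e.1.c i • e.1.v i = f a :=
      fun e => hF e.2
    choose aOf haOf1 haOf2 using hmem
    set W : Finset B := F.biUnion (fun e => Finset.image e.v Finset.univ) with hWdef
    have hvW : ∀ (e : {e // e ∈ F}) (t : Fin e.1.k), e.1.v t ∈ W := by
      intro e t
      rw [hWdef]
      exact Finset.mem_biUnion.mpr ⟨e.1, e.2, Finset.mem_image.mpr ⟨t, Finset.mem_univ t, rfl⟩⟩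
    set eqF : Fin F.card ≃ {e // e ∈ F} := F.equivFin.symm with heqF
    set eqW : Fin W.card ≃ {w // w ∈ W} := W.equivFin.symm with heqW
    set rr : Fin F.card → Fin W.card → R := fun i j =>
      ∑ t ∈ Finset.univ.filter (fun t => (eqF i).1.v t = ((eqW j : {w // w ∈ W}) : B)),
        (eqF i).1.c t with hrr
    set av : Fin F.card → B := fun i => f (aOf (eqF i)) with hav
    have groupB : ∀ (i : Fin F.card) (Y : B → B),
        ∑ j, rr i j • Y ((eqW j : {w // w ∈ W}) : B)
          = ∑ t, (eqF i).1.c t • Y ((eqF i).1.v t) := by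
      intro i Y
      calc ∑ j, rr i j • Y ((eqW j : {w // w ∈ W}) : B)
          = ∑ w : {w // w ∈ W}, (∑ t ∈ Finset.univ.filter
              (fun t => (eqF i).1.v t = (w : B)), (eqF i).1.c t) • Y (w : B) :=
            Equiv.sum_comp eqW (fun w : {w // w ∈ W} => (∑ t ∈ Finset.univ.filter
              (fun t => (eqF i).1.v t = (w : B)), (eqF i).1.c t) • Y (w : B))
        _ = ∑ w ∈ W, (∑ t ∈ Finset.univ.filter
              (fun t => (eqF i).1.v t = w), (eqF i).1.c t) • Y w :=
            Finset.sum_coe_sort W (fun w => (∑ t ∈ Finset.univ.filter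
              (fun t => (eqF i).1.v t = w), (eqF i).1.c t) • Y w)
        _ = ∑ t, (eqF i).1.c t • Y ((eqF i).1.v t) :=
            group_sum _ _ _ W (fun t => hvW (eqF i) t) Y
    have groupM : ∀ (i : Fin F.card) (Y : B → M),
        ∑ j, rr i j • Y ((eqW j : {w // w ∈ W}) : B)
          = ∑ t, (eqF i).1.c t • Y ((eqF i).1.v t) := by
      intro i Y
      calc ∑ j, rr i j • Y ((eqW j : {w // w ∈ W}) : B)
          = ∑ w : {w // w ∈ W}, (∑ t ∈ Finset.univ.filter
              (fun t => (eqF i).1.v t = (w : B)), (eqF i).1.c t) • Y (w : B) :=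
            Equiv.sum_comp eqW (fun w : {w // w ∈ W} => (∑ t ∈ Finset.univ.filter
              (fun t => (eqF i).1.v t = (w : B)), (eqF i).1.c t) • Y (w : B))
        _ = ∑ w ∈ W, (∑ t ∈ Finset.univ.filter
              (fun t => (eqF i).1.v t = w), (eqF i).1.c t) • Y w :=
            Finset.sum_coe_sort W (fun w => (∑ t ∈ Finset.univ.filter
              (fun t => (eqF i).1.v t = w), (eqF i).1.c t) • Y w)
        _ = ∑ t, (eqF i).1.c t • Y ((eqF i).1.v t) :=
            group_sum _ _ _ W (fun t => hvW (eqF i) t) Y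
    have hsolB : ∃ x : Fin W.card → B, ∀ i, (∑ j, rr i j • x j) = av i := by
      refine ⟨fun j => ((eqW j : {w // w ∈ W}) : B), fun i => ?_⟩
      have h1 := groupB i id
      simp only [id_eq] at h1
      rw [h1]
      exact haOf2 (eqF i)
    obtain ⟨x', hx'mem, hx'⟩ := hf.2 F.card W.card rr av
      (fun i => LinearMap.mem_range_self f (aOf (eqF i))) hsolB
    have hx'mem' : ∀ j, ∃ a : A, f a = x' j := fun j => hx'mem j
    choose aW haW using hx'mem'
    have hrowA : ∀ i, ∑ j, rr i j • aW j = aOf (eqF i) := by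
      intro i
      apply hf.1
      rw [map_sum]
      rw [Finset.sum_congr rfl fun j _ => by rw [map_smul, haW j]]
      exact hx' i
    set Y : B → M := fun b => if hb : b ∈ W then g (aW (eqW.symm ⟨b, hb⟩)) else 0 with hYdef
    have hYW : ∀ j : Fin W.card, Y ((eqW j : {w // w ∈ W}) : B) = g (aW j) := by
      intro j
      have h2 := (eqW j).2
      rw [hYdef]
      simp only []
      rw [dif_pos h2]
      have h3 : (⟨((eqW j : {w // w ∈ W}) : B), h2⟩ : {w // w ∈ W}) = eqW j := rfl
      rw [h3, Equiv.symm_apply_apply]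
    refine ⟨Y, fun e he => ?_⟩
    have hee : eqF (eqF.symm ⟨e, he⟩) = ⟨e, he⟩ := Equiv.apply_symm_apply _ _
    have hgm := groupM (eqF.symm ⟨e, he⟩) Y
    rw [hee] at hgm
    have hra := hrowA (eqF.symm ⟨e, he⟩)
    rw [hee] at hra
    show ∑ t, e.c t • Y (e.v t) = e.b
    calc ∑ t, e.c t • Y (e.v t)
        = ∑ j, rr (eqF.symm ⟨e, he⟩) j • Y ((eqW j : {w // w ∈ W}) : B) := hgm.symm
      _ = ∑ j, rr (eqF.symm ⟨e, he⟩) j • g (aW j) :=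
          Finset.sum_congr rfl fun j _ => by rw [hYW j]
      _ = g (∑ j, rr (eqF.symm ⟨e, he⟩) j • aW j) := by
          rw [map_sum]
          exact (Finset.sum_congr rfl fun j _ => by rw [map_smul]).symm
      _ = g (aOf ⟨e, he⟩) := by rw [hra]
      _ = e.b := (haOf1 ⟨e, he⟩).symm
  obtain ⟨x, hx⟩ := hsolv B T hfs
  have hadd : ∀ b₁ b₂ : B, x (b₁ + b₂) = x b₁ + x b₂ := by
    intro b₁ b₂
    have hmem : (⟨3, ![1, 1, -1], ![b₁, b₂, b₁ + b₂], 0⟩ : LinEq R B M) ∈ T := by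
      refine ⟨0, by simp, ?_⟩
      rw [Fin.sum_univ_three]
      simp only [Matrix.cons_val_zero, Matrix.cons_val_one, Matrix.head_cons,
        Matrix.cons_val_two, Matrix.tail_cons, one_smul, neg_smul, map_zero]
      abel
    have hh := hx _ hmem
    unfold LinEq.Holds at hh
    rw [Fin.sum_univ_three] at hh
    simp only [Matrix.cons_val_zero, Matrix.cons_val_one, Matrix.head_cons,
      Matrix.cons_val_two, Matrix.tail_cons, one_smul, neg_smul] at hh
    rw [← sub_eq_add_neg] at hh
    exact (sub_eq_zero.mp hh).symm
  have hsmul : ∀ (r : R) (b : B), x (r • b) = r • x b := by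
    intro r b
    have hmem : (⟨2, ![r, -1], ![b, r • b], 0⟩ : LinEq R B M) ∈ T := by
      refine ⟨0, by simp, ?_⟩
      rw [Fin.sum_univ_two]
      simp only [Matrix.cons_val_zero, Matrix.cons_val_one, Matrix.head_cons,
        neg_smul, one_smul, map_zero]
      abel
    have hh := hx _ hmem
    unfold LinEq.Holds at hh
    rw [Fin.sum_univ_two] at hh
    simp only [Matrix.cons_val_zero, Matrix.cons_val_one, Matrix.head_cons,
      neg_smul, one_smul] at hh
    rw [← sub_eq_add_neg] at hh
    exact (sub_eq_zero.mp hh).symm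
  have hgf : ∀ a : A, x (f a) = g a := by
    intro a
    have hmem : (⟨1, ![1], ![f a], g a⟩ : LinEq R B M) ∈ T := by
      refine ⟨a, rfl, ?_⟩
      rw [Fin.sum_univ_one]
      simp
    have hh := hx _ hmem
    unfold LinEq.Holds at hh
    rw [Fin.sum_univ_one] at hh
    simpa using hh
  refine ⟨{ toFun := x, map_add' := hadd,
            map_smul' := fun r b => by
              show x (r • b) = (RingHom.id R) r • x b
              exact hsmul r b }, ?_⟩
  apply LinearMap.ext
  intro a
  exact hgf a

end Final


theorem stmt13 (R : Type u) [Ring R] (E : Type u) [AddCommGroup E] [Module R E]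
    (J : Type u) (hJ : Cardinal.mk J = max (Cardinal.mk R) Cardinal.aleph0) :
    -- `E` is Σ-pure-injective, i.e. `E^(I)` is pure-injective for every set `I`,
    -- iff `E^(κ)` is pure-injective, where `κ = card R + ℵ₀`
    (∀ I : Type u, PureInjective R (DirectSum I fun _ => E)) ↔
      PureInjective R (DirectSum J fun _ => E) := by
  constructor
  · intro h
    exact h J
  · intro hPI I
    rcases isEmpty_or_nonempty I with hI | hI
    · -- the direct sum over an empty index type is trivial
      intro A B _ _ _ _ f hf g
      refine ⟨0, ?_⟩
      apply LinearMap.ext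
      intro a
      haveI : Subsingleton (DirectSum I fun _ => E) :=
        ⟨fun x y => DirectSum.ext_component R (fun i => hI.elim i)⟩
      exact Subsingleton.elim _ _
    · haveI hinf : Infinite J := Cardinal.infinite_iff.mpr (by rw [hJ]; exact le_max_right _ _)
      have hdccE : PPdcc.{u, u, u} R E := PPdcc_of_pureInjective hPI
      have hdccN : PPdcc.{u, u, u} R (DirectSum I fun _ => E) := PPdcc_directSum hI hdccE
      exact pureInjective_of_solv fun V T hT => solv_of_finSolv hdccN T hT
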